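/- The instantaneous rate of arbitrage profit for the constant product market maker, normalized by pool value, equals (σ²/8)·P_trade·(e^{γ/2}+e^{-γ/2})/(2(1 - σ²/(8λ))) when λ > σ²/8, where P_trade = 1/(1+√(2λ)γ/σ). Formally: λ·[π₊·e^{γ/2}/(8λ/σ²-1) + π₋·e^{-γ/2}/(8λ/σ²-1)] equals the stated expression, with π₊ = π₋ = P_trade/2. -/

import Mathlib

open Real

theorem cpmm_arb_rate
    (σ lam γ : ℝ) (hσ : 0 < σ) (hγ : 0 < γ) (hlam : σ ^ 2 / 8 < lam)
    (η : ℝ) (hη : η = Real.sqrt (2 * lam) * γ / σ)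
    (Ptrade : ℝ) (hPt : Ptrade = 1 / (1 + η))
    (πp πm : ℝ) (hπp : πp = Ptrade / 2) (hπm : πm = Ptrade / 2) :
    lam * (πp * Real.exp (γ / 2) / (8 * lam / σ ^ 2 - 1)
            + πm * Real.exp (-γ / 2) / (8 * lam / σ ^ 2 - 1))
      = (σ ^ 2 / 8) * Ptrade
          * ((Real.exp (γ / 2) + Real.exp (-γ / 2))
              / (2 * (1 - σ ^ 2 / (8 * lam)))) := by
  have hσ2 : (0:ℝ) < σ ^ 2 := by positivity
  have hl : 0 < lam := lt_of_le_of_lt (by positivity) hlam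
  have h1 : 8 * lam - σ ^ 2 > 0 := by nlinarith
  subst hπp hπm
  field_simp
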